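/- Let Ω ⊆ EuclideanSpace ℝ (Fin 3) be open and let u : EuclideanSpace ℝ (Fin 3) → ℝ be twice continuously differentiable on Ω (ContDiffOn ℝ 2 u Ω). Assume u is harmonic on Ω, i.e., for every y ∈ Ω, ∑_{i ∈ Fin 3} (iteratedFDeriv ℝ 2 u y) (e i) (e i) = 0, where (e i) is the standard orthonormal basis. Let x ∈ Ω be a point with gradient u x ≠ 0. Then the function y ↦ ‖gradient u y‖ is differentiable at x and ‖fderiv ℝ (fun y => ‖gradient u y‖) x‖^2 ≤ (2/3) · ∑_{i,j ∈ Fin 3} ((iteratedFDeriv ℝ 2 u x) (e i) (e j))^2. -/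

import Mathlib

open scoped RealInnerProductSpace
noncomputable abbrev E3 := EuclideanSpace ℝ (Fin 3)
open ContinuousLinearMap in
lemma tr_inv (T : E3 →L[ℝ] E3) (b c : OrthonormalBasis (Fin 3) ℝ E3) :
    ∑ i, ⟪T (b i), b i⟫ = ∑ k, ⟪T (c k), c k⟫ := by
  calc ∑ i, ⟪T (b i), b i⟫ = ∑ i, ∑ k, ⟪T (b i), c k⟫ * ⟪c k, b i⟫ := by
        simp_rw [c.sum_inner_mul_inner]
    _ = ∑ k, ∑ i, ⟪c k, b i⟫ * ⟪b i, (adjoint T) (c k)⟫ := by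
        rw [Finset.sum_comm]
        refine Finset.sum_congr rfl fun k _ => Finset.sum_congr rfl fun i _ => ?_
        rw [adjoint_inner_right]; ring
    _ = ∑ k, ⟪T (c k), c k⟫ := by
        refine Finset.sum_congr rfl fun k _ => ?_
        rw [b.sum_inner_mul_inner, ← adjoint_inner_right]

open ContinuousLinearMap in
lemma frob_aux (T : E3 →L[ℝ] E3) (b c : OrthonormalBasis (Fin 3) ℝ E3) :
    ∑ i, ‖T (b i)‖^2 = ∑ k, ‖(adjoint T) (c k)‖^2 := by
  calc ∑ i, ‖T (b i)‖^2 = ∑ i, ∑ k, ⟪T (b i), c k⟫ * ⟪c k, T (b i)⟫ := by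
        simp_rw [c.sum_inner_mul_inner]
        exact Finset.sum_congr rfl fun i _ => (real_inner_self_eq_norm_sq _).symm
    _ = ∑ k, ∑ i, ⟪(adjoint T) (c k), b i⟫ * ⟪b i, (adjoint T) (c k)⟫ := by
        rw [Finset.sum_comm]
        refine Finset.sum_congr rfl fun k _ => Finset.sum_congr rfl fun i _ => ?_
        rw [adjoint_inner_left, adjoint_inner_right, real_inner_comm (c k)]
    _ = ∑ k, ‖(adjoint T) (c k)‖^2 := by
        refine Finset.sum_congr rfl fun k _ => ?_
        rw [b.sum_inner_mul_inner]; exact real_inner_self_eq_norm_sq _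

open ContinuousLinearMap in
lemma frob_inv (T : E3 →L[ℝ] E3) (b c : OrthonormalBasis (Fin 3) ℝ E3) :
    ∑ i, ‖T (b i)‖^2 = ∑ i, ‖T (c i)‖^2 :=
  (frob_aux T b c).trans (frob_aux T c c).symm

open ContinuousLinearMap in
lemma key_lemma (T : E3 →L[ℝ] E3) (hsymm : ∀ v w : E3, ⟪T v, w⟫ = ⟪T w, v⟫)
    (b : OrthonormalBasis (Fin 3) ℝ E3)
    (htr : ∑ i, ⟪T (b i), b i⟫ = 0) (n : E3) (hn : ‖n‖ = 1) :
    ‖T n‖ ^ 2 ≤ (2 / 3) * ∑ i, ∑ j, ⟪T (b i), b j⟫ ^ 2 := by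
  -- extend n to an orthonormal basis
  have hcard : Module.finrank ℝ E3 = Fintype.card (Fin 3) := by simp
  have horth : Orthonormal ℝ (({0} : Set (Fin 3)).restrict (fun _ => n)) := by
    rw [orthonormal_iff_ite]
    rintro ⟨i, hi⟩ ⟨j, hj⟩
    simp only [Set.mem_singleton_iff] at hi hj
    have : (⟨i, hi⟩ : ({0} : Set (Fin 3))) = ⟨j, hj⟩ := by subst hi; subst hj; rfl
    rw [if_pos this]
    show (inner ℝ n n : ℝ) = 1
    rw [real_inner_self_eq_norm_sq, hn]; norm_num
  obtain ⟨c, hc⟩ := horth.exists_orthonormalBasis_extension_of_card_eq hcard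
  have hc0 : c 0 = n := hc 0 rfl
  -- Parseval per row
  have row : ∀ (v : E3), ‖T v‖ ^ 2 = ∑ j, ⟪T v, c j⟫ ^ 2 := by
    intro v
    rw [← real_inner_self_eq_norm_sq, ← c.sum_inner_mul_inner (T v) (T v)]
    exact Finset.sum_congr rfl fun j _ => by rw [sq, real_inner_comm (c j)]
  have rowb : ∀ (v : E3), ‖T v‖ ^ 2 = ∑ j, ⟪T v, b j⟫ ^ 2 := by
    intro v
    rw [← real_inner_self_eq_norm_sq, ← b.sum_inner_mul_inner (T v) (T v)]
    exact Finset.sum_congr rfl fun j _ => by rw [sq, real_inner_comm (b j)]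
  -- Frobenius norm equality between bases
  have hfrob : ∑ i, ∑ j, ⟪T (b i), b j⟫ ^ 2 = ∑ i, ∑ j, ⟪T (c i), c j⟫ ^ 2 := by
    calc ∑ i, ∑ j, ⟪T (b i), b j⟫ ^ 2 = ∑ i, ‖T (b i)‖ ^ 2 :=
          Finset.sum_congr rfl fun i _ => (rowb _).symm
      _ = ∑ i, ‖T (c i)‖ ^ 2 := frob_inv T b c
      _ = ∑ i, ∑ j, ⟪T (c i), c j⟫ ^ 2 := Finset.sum_congr rfl fun i _ => row _
  have htrc : ∑ i, ⟪T (c i), c i⟫ = 0 := (tr_inv T c b).trans htr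
  rw [hfrob, ← hc0, row]
  have h01 : ⟪T (c 0), c 1⟫ = ⟪T (c 1), c 0⟫ := hsymm _ _
  have h02 : ⟪T (c 0), c 2⟫ = ⟪T (c 2), c 0⟫ := hsymm _ _
  have h12 : ⟪T (c 1), c 2⟫ = ⟪T (c 2), c 1⟫ := hsymm _ _
  rw [Fin.sum_univ_three] at htrc ⊢
  simp only [Fin.sum_univ_three]
  have ha2 : ⟪T (c 0), c 0⟫ ^ 2 = (⟪T (c 1), c 1⟫ + ⟪T (c 2), c 2⟫) ^ 2 := by
    have : ⟪T (c 0), c 0⟫ = -(⟪T (c 1), c 1⟫ + ⟪T (c 2), c 2⟫) := by linarith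
    rw [this]; ring
  have h01s : ⟪T (c 0), c 1⟫ ^ 2 = ⟪T (c 1), c 0⟫ ^ 2 := by rw [h01]
  have h02s : ⟪T (c 0), c 2⟫ ^ 2 = ⟪T (c 2), c 0⟫ ^ 2 := by rw [h02]
  have h12s : ⟪T (c 1), c 2⟫ ^ 2 = ⟪T (c 2), c 1⟫ ^ 2 := by rw [h12]
  nlinarith [ha2, h01s, h02s, h12s, sq_nonneg (⟪T (c 1), c 1⟫ - ⟪T (c 2), c 2⟫),
    sq_nonneg (⟪T (c 0), c 1⟫), sq_nonneg (⟪T (c 0), c 2⟫), sq_nonneg (⟪T (c 1), c 2⟫)]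

open InnerProductSpace Topology in
theorem refined_kato_harmonic
    (Ω : Set (EuclideanSpace ℝ (Fin 3))) (hΩ : IsOpen Ω)
    (u : EuclideanSpace ℝ (Fin 3) → ℝ)
    (hu : ContDiffOn ℝ 2 u Ω)
    (harm : ∀ y ∈ Ω, ∑ i : Fin 3,
      (iteratedFDeriv ℝ 2 u y)
        ![EuclideanSpace.single i (1 : ℝ), EuclideanSpace.single i (1 : ℝ)] = 0)
    (x : EuclideanSpace ℝ (Fin 3)) (hx : x ∈ Ω)
    (hgrad : gradient u x ≠ 0) :
    DifferentiableAt ℝ (fun y => ‖gradient u y‖) x ∧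
      ‖fderiv ℝ (fun y => ‖gradient u y‖) x‖ ^ 2 ≤
        (2 / 3) * ∑ i : Fin 3, ∑ j : Fin 3,
          ((iteratedFDeriv ℝ 2 u x)
            ![EuclideanSpace.single i (1 : ℝ), EuclideanSpace.single j (1 : ℝ)]) ^ 2 := by
  have hmem : Ω ∈ 𝓝 x := hΩ.mem_nhds hx
  have hu2 : ContDiffAt ℝ 2 u x := hu.contDiffAt hmem
  have hf1 : ContDiffAt ℝ 1 (fderiv ℝ u) x := hu2.fderiv_right (by norm_num)
  have hdF : DifferentiableAt ℝ (fderiv ℝ u) x := hf1.differentiableAt one_ne_zero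
  set F : E3 →L[ℝ] (E3 →L[ℝ] ℝ) := fderiv ℝ (fderiv ℝ u) x with hFdef
  have hF : HasFDerivAt (fderiv ℝ u) F x := hdF.hasFDerivAt
  have hev : ∀ᶠ y in 𝓝 x, HasFDerivAt u (fderiv ℝ u y) y := by
    filter_upwards [hmem] with y hy
    exact ((hu.contDiffAt (hΩ.mem_nhds hy)).differentiableAt (by norm_num)).hasFDerivAt
  have hsymmF : ∀ v w, F v w = F w v := fun v w =>
    second_derivative_symmetric_of_eventually hev hF v w
  -- the Hessian as an endomorphism
  let ℓ : (E3 →L[ℝ] ℝ) →L[ℝ] E3 :=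
    (toDual ℝ E3).symm.toContinuousLinearEquiv.toContinuousLinearMap
  set T : E3 →L[ℝ] E3 := ℓ.comp F with hTdef
  have hg : HasFDerivAt (gradient u) T x := by
    have h := ℓ.hasFDerivAt.comp x hF
    exact h
  have hTF : ∀ v w : E3, ⟪T v, w⟫_ℝ = F v w := fun v w => by
    show ⟪(toDual ℝ E3).symm (F v), w⟫_ℝ = F v w
    exact toDual_symm_apply
  have hsymm : ∀ v w : E3, ⟪T v, w⟫_ℝ = ⟪T w, v⟫_ℝ := fun v w => by
    rw [hTF, hTF, hsymmF]
  set b : OrthonormalBasis (Fin 3) ℝ E3 := EuclideanSpace.basisFun (Fin 3) ℝ with hbdef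
  have hb : ∀ i, b i = EuclideanSpace.single i (1:ℝ) := fun i => by simp [hbdef]
  have hiter : ∀ v w : E3, (iteratedFDeriv ℝ 2 u x) ![v, w] = F v w := fun v w => by
    rw [iteratedFDeriv_two_apply]
    simp
    rfl
  have hentry : ∀ i j, ⟪T (b i), b j⟫_ℝ =
      (iteratedFDeriv ℝ 2 u x) ![EuclideanSpace.single i (1:ℝ), EuclideanSpace.single j (1:ℝ)] := by
    intro i j
    rw [hTF, ← hb i, ← hb j, hiter]
  have htr : ∑ i, ⟪T (b i), b i⟫_ℝ = 0 := by
    rw [Finset.sum_congr rfl fun i _ => hentry i i]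
    exact harm x hx
  -- the unit vector
  set g : E3 := gradient u x with hgdef
  have hgn : ‖g‖ ≠ 0 := norm_ne_zero_iff.2 hgrad
  have hgpos : (0:ℝ) < ‖g‖ := norm_pos_iff.2 hgrad
  set n' : E3 := ‖g‖⁻¹ • g with hndef
  have hn1 : ‖n'‖ = 1 := norm_smul_inv_norm hgrad
  -- derivative of the norm of the gradient
  have hq : HasFDerivAt (fun y => ⟪gradient u y, gradient u y⟫_ℝ)
      ((fderivInnerCLM ℝ (g, g)).comp (T.prod T)) x := hg.inner ℝ hg
  have hqx : ⟪g, g⟫_ℝ = ‖g‖ ^ 2 := real_inner_self_eq_norm_sq g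
  have hqpos : (0:ℝ) < ⟪g, g⟫_ℝ := by rw [hqx]; positivity
  have hsq : HasDerivAt Real.sqrt (1 / (2 * Real.sqrt (⟪g, g⟫_ℝ))) (⟪g, g⟫_ℝ) :=
    Real.hasDerivAt_sqrt hqpos.ne'
  have hcomp : HasFDerivAt (fun y => Real.sqrt ⟪gradient u y, gradient u y⟫_ℝ)
      ((1 / (2 * Real.sqrt (⟪g, g⟫_ℝ))) • ((fderivInnerCLM ℝ (g, g)).comp (T.prod T))) x :=
    hsq.comp_hasFDerivAt x hq
  have heq : (fun y => Real.sqrt ⟪gradient u y, gradient u y⟫_ℝ)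
      = (fun y => ‖gradient u y‖) := funext fun y => by
    rw [real_inner_self_eq_norm_sq, Real.sqrt_sq (norm_nonneg _)]
  rw [heq] at hcomp
  refine ⟨hcomp.differentiableAt, ?_⟩
  rw [hcomp.fderiv]
  set D := (1 / (2 * Real.sqrt (⟪g, g⟫_ℝ))) • ((fderivInnerCLM ℝ (g, g)).comp (T.prod T)) with hD
  have hsqrt : Real.sqrt (⟪g, g⟫_ℝ) = ‖g‖ := by rw [hqx, Real.sqrt_sq (norm_nonneg _)]
  have hDapp : ∀ v : E3, D v = ‖g‖⁻¹ * ⟪T g, v⟫_ℝ := by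
    intro v
    simp only [hD, ContinuousLinearMap.smul_apply, ContinuousLinearMap.comp_apply,
      ContinuousLinearMap.prod_apply, fderivInnerCLM_apply, hsqrt]
    rw [real_inner_comm (T v) g, ← hsymm]
    field_simp
    rw [smul_eq_mul]; field_simp; ring
  have hDle : ‖D‖ ≤ ‖T n'‖ := by
    refine ContinuousLinearMap.opNorm_le_bound D (norm_nonneg _) fun v => ?_
    rw [hDapp v]
    have h1 : |⟪T g, v⟫_ℝ| ≤ ‖T g‖ * ‖v‖ := abs_real_inner_le_norm _ _
    have h2 : ‖T n'‖ = ‖g‖⁻¹ * ‖T g‖ := by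
      rw [hndef, map_smul, norm_smul, norm_inv, norm_norm]
    rw [h2, Real.norm_eq_abs, abs_mul, abs_of_nonneg (by positivity : (0:ℝ) ≤ ‖g‖⁻¹)]
    calc ‖g‖⁻¹ * |⟪T g, v⟫_ℝ| ≤ ‖g‖⁻¹ * (‖T g‖ * ‖v‖) := by
          exact mul_le_mul_of_nonneg_left h1 (by positivity)
      _ = ‖g‖⁻¹ * ‖T g‖ * ‖v‖ := by ring
  have hkey := key_lemma T hsymm b htr n' hn1
  have hfinal : ∑ i, ∑ j, ⟪T (b i), b j⟫_ℝ ^ 2 = ∑ i : Fin 3, ∑ j : Fin 3,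
      ((iteratedFDeriv ℝ 2 u x)
        ![EuclideanSpace.single i (1:ℝ), EuclideanSpace.single j (1:ℝ)]) ^ 2 := by
    exact Finset.sum_congr rfl fun i _ => Finset.sum_congr rfl fun j _ => by rw [hentry]
  rw [← hfinal]
  calc ‖D‖ ^ 2 ≤ ‖T n'‖ ^ 2 := by
        exact pow_le_pow_left₀ (norm_nonneg _) hDle 2
    _ ≤ (2/3) * ∑ i, ∑ j, ⟪T (b i), b j⟫_ℝ ^ 2 := hkey
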